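/- arXiv:2112.13822 — 2 statements merged into one kernel-verified Lean document; each statement's English description precedes it below -/
import Mathlib

section
/- Let c_1, ..., c_β be simple directed cycles in a directed multigraph with edge lengths linearly independent over ℚ, and suppose each c_i contains a designated 'backward' edge e_i that lies in no other cycle c_j (j ≠ i). Then the cycle times t(c_1), ..., t(c_β) are linearly independent over ℚ; in particular, the map (a_1,...,a_β) ↦ Σ a_i t(c_i) from (ℤ≥0)^β to ℝ is injective. -/
/-- A directed multigraph: edges with a source and a target vertex. -/
structure DiMultigraph (V E : Type*) where
  src : E → V
  tgt : E → V

/-- A nonempty injective cyclically-closed family of edges is a simple-enough directed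
cycle (each edge used at most once); we record its edge set as a `Finset`. -/
def DiMultigraph.IsCycleEdgeSet {V E : Type*} [DecidableEq E]
    (G : DiMultigraph V E) (s : Finset E) : Prop :=
  ∃ (m : ℕ) (_ : 0 < m) (es : Fin m → E), Function.Injective es ∧
    (∀ i, G.tgt (es i) = G.src (es (finRotate _ i))) ∧
    s = Finset.image es Finset.univ

/-- If each simple cycle `c_i` contains a designated backward edge `e_i` lying in no
other cycle `c_j`, and edge lengths are positive and linearly independent over `ℚ`,
then the cycle times `t(c_1), …, t(c_β)` are linearly independent over `ℚ`; in
particular `(a_1,…,a_β) ↦ Σ a_i t(c_i)` is injective on `(ℤ≥0)^β`. -/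
theorem cycle_times_linearIndependent {V E : Type*} [DecidableEq E]
    (G : DiMultigraph V E) (t : E → ℝ) (hpos : ∀ e, 0 < t e)
    (hli : LinearIndependent ℚ t)
    (β : ℕ) (c : Fin β → Finset E) (hc : ∀ i, G.IsCycleEdgeSet (c i))
    (e : Fin β → E) (he : ∀ i, e i ∈ c i)
    (hback : ∀ i j, i ≠ j → e i ∉ c j) :
    LinearIndependent ℚ (fun i => ∑ x ∈ c i, t x) ∧
    Function.Injective (fun a : Fin β → ℕ => ∑ i, (a i : ℝ) * ∑ x ∈ c i, t x) := by
  have key : ∀ g : Fin β → ℚ, ∑ i, g i • ∑ x ∈ c i, t x = 0 → ∀ j, g j = 0 := by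
    intro g hg j
    set l : E →₀ ℚ := ∑ i, ∑ x ∈ c i, Finsupp.single x (g i) with hldef
    have htot : Finsupp.linearCombination ℚ t l = 0 := by
      rw [hldef, map_sum]
      simp only [map_sum, Finsupp.linearCombination_single]
      rw [← hg]
      exact Finset.sum_congr rfl fun i _ => (Finset.smul_sum).symm
    have hl0 : l = 0 := linearIndependent_iff.mp hli l htot
    have := DFunLike.congr_fun hl0 (e j)
    rw [hldef] at this
    simp only [Finsupp.coe_finset_sum, Finset.sum_apply, Finsupp.single_apply,
      Finsupp.coe_zero, Pi.zero_apply] at this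
    rw [← this]
    rw [Finset.sum_eq_single j]
    · rw [Finset.sum_ite_eq' (c j) (e j) (fun _ => g j), if_pos (he j)]
    · intro i _ hij
      rw [Finset.sum_ite_eq' (c i) (e j) (fun _ => g i),
        if_neg (hback j i (fun h => hij h.symm))]
    · intro h; exact absurd (Finset.mem_univ j) h
  have hLI : LinearIndependent ℚ (fun i => ∑ x ∈ c i, t x) :=
    Fintype.linearIndependent_iff.mpr fun g hg => key g hg
  refine ⟨hLI, fun a b hab => ?_⟩
  have hg : ∑ i, ((a i : ℚ) - (b i : ℚ)) • ∑ x ∈ c i, t x = 0 := by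
    simp only [sub_smul, Finset.sum_sub_distrib, sub_eq_zero]
    simpa [Rat.smul_def] using hab
  funext j
  have := key _ hg j
  have : (a j : ℚ) = b j := by linarith [sub_eq_zero.mp (this)]
  exact_mod_cast this
end

section
/- Let G be a Hamiltonian directed multigraph with first Betti number β = |E| - |V| + 1, and suppose G is an oriented cycle together with extra (outer) edges, where the vertex set is partitioned into a set A of consecutively numbered vertices not containing the start vertex and its complement B containing the start vertex, and every outer edge goes from B to A. Then every simple directed cycle of G contains at most one outer edge. -/
/-- For a Hamiltonian digraph on vertices `0,1,…,n` (inner edges forming the directed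
cycle `i → i+1 (mod n+1)`), suppose the vertex set is split into a cyclically
consecutive set `A` not containing the start vertex `0` and its complement `B`, and
every outer edge goes from `B` to `A`. Then every simple directed cycle contains at
most one outer edge. -/
theorem simple_cycle_at_most_one_outer_edge {n : ℕ} {E : Type*}
    (G : DiMultigraph (Fin (n + 1)) E)
    (inner : Fin (n + 1) → E)
    (hinner : ∀ i, G.src (inner i) = i ∧ G.tgt (inner i) = i + 1)
    (A : Finset (Fin (n + 1)))
    (hConsec : ∃ (s : Fin (n + 1)) (l : ℕ),
      A = (Finset.range l).image (fun j : ℕ => s + Fin.ofNat (n + 1) j))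
    (hstart : (0 : Fin (n + 1)) ∉ A)
    (houter : ∀ e : E, e ∉ Set.range inner → G.src e ∉ A ∧ G.tgt e ∈ A) :
    ∀ (m : ℕ) (es : Fin m → E),
      0 < m →
      (∀ i, G.tgt (es i) = G.src (es (finRotate _ i))) →
      Function.Injective (fun i => G.src (es i)) →
      ∀ i j, es i ∉ Set.range inner → es j ∉ Set.range inner → i = j := by
  intro m es hm hclose hinj i j hi hj
  by_contra hne
  classical
  set f : Fin m → Fin (n + 1) := fun i => G.src (es i) with hf
  obtain ⟨s, l, hA⟩ := hConsec
  -- a vertex of `A` whose successor is outside `A` is uniquely determined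
  have key : ∀ x : Fin (n + 1), x ∈ A → x + 1 ∉ A →
      x = s + Fin.ofNat (n + 1) (l - 1) := by
    intro x hx hx1
    rw [hA] at hx
    simp only [Finset.mem_image, Finset.mem_range] at hx
    obtain ⟨k, hk, rfl⟩ := hx
    have hkl : k + 1 = l := by
      by_contra h
      have hk1 : k + 1 < l := lt_of_le_of_ne hk h
      apply hx1
      rw [hA]
      exact Finset.mem_image.2 ⟨k + 1, Finset.mem_range.2 hk1, by
        rw [add_assoc]; congr 1; apply Fin.ext
        simp only [Fin.val_add, Fin.val_ofNat, Fin.val_one']; exact Nat.add_mod _ _ _⟩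
    have hk' : k = l - 1 := by omega
    rw [hk']
  have hftgt : ∀ i, G.tgt (es i) = f (finRotate m i) := fun i => hclose i
  have hstep : ∀ i : Fin m, es i ∈ Set.range inner → f (finRotate m i) = f i + 1 := by
    rintro i ⟨k, hk⟩
    have h1 := (hinner k).1
    have h2 := (hinner k).2
    rw [← hftgt, ← hk, h2, ← h1, hk]
  set S : Finset (Fin m) := Finset.univ.filter (fun i => f i ∈ A) with hS
  set S' : Finset (Fin m) := Finset.univ.filter (fun i => f (finRotate m i) ∈ A) with hS'
  have hcard : S'.card = S.card := by
    have himg : S' = S.image (finRotate m).symm := by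
      ext x
      simp only [hS, hS', Finset.mem_image, Finset.mem_filter, Finset.mem_univ, true_and]
      constructor
      · intro hx; exact ⟨finRotate m x, hx, Equiv.symm_apply_apply _ _⟩
      · rintro ⟨y, hy, rfl⟩; rwa [Equiv.apply_symm_apply]
    rw [himg, Finset.card_image_of_injective _ (Equiv.injective _)]
  have hleav : (S \ S').card ≤ 1 := by
    have hsub : S \ S' ⊆
        Finset.univ.filter (fun i => f i = s + Fin.ofNat (n + 1) (l - 1)) := by
      intro x hx
      simp only [Finset.mem_sdiff, hS, hS', Finset.mem_filter, Finset.mem_univ,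
        true_and] at hx ⊢
      obtain ⟨h1, h2⟩ := hx
      by_cases hin : es x ∈ Set.range inner
      · exact key _ h1 (by rw [← hstep x hin]; exact h2)
      · exact absurd h1 (houter _ hin).1
    refine le_trans (Finset.card_le_card hsub) (Finset.card_le_one.2 ?_)
    intro a ha b hb
    simp only [Finset.mem_filter] at ha hb
    exact hinj (ha.2.trans hb.2.symm)
  have hent : 2 ≤ (S' \ S).card := by
    have hsub : ({i, j} : Finset (Fin m)) ⊆ S' \ S := by
      intro x hx
      simp only [Finset.mem_insert, Finset.mem_singleton] at hx
      have hx' : es x ∉ Set.range inner := by rcases hx with rfl | rfl <;> assumption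
      simp only [Finset.mem_sdiff, hS, hS', Finset.mem_filter, Finset.mem_univ, true_and]
      exact ⟨by rw [← hftgt]; exact (houter _ hx').2, (houter _ hx').1⟩
    calc 2 = ({i, j} : Finset (Fin m)).card := (Finset.card_pair hne).symm
      _ ≤ _ := Finset.card_le_card hsub
  have h1 := Finset.card_sdiff_add_card_inter S S'
  have h2 := Finset.card_sdiff_add_card_inter S' S
  rw [Finset.inter_comm] at h2
  omega
end
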